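/- Let (X,μ) be a measure space, 2 ≤ q ≤ 3, and let u, r ∈ L^q(X,μ) with u ≥ 0, u + r ≥ 0, and ∫ u^(q-1)·r dμ = 0. Then ‖u+r‖_q² ≤ ‖u‖_q² + ‖u‖_q^(2-q)·( (q-1)·∫ u^(q-2)·r² dμ + (2/q)·∫ (max(r,0))^q dμ ). -/

import Mathlib

open Real MeasureTheory ENNReal

lemma lqA {s t : ℝ} (hs0 : 0 ≤ s) (hs1 : s ≤ 1) (ht : 0 ≤ t) :
    (1 + t) ^ s ≤ 1 + t ^ s := by
  have h := NNReal.rpow_add_le_add_rpow 1 t.toNNReal hs0 hs1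
  have h2 := (NNReal.coe_le_coe).2 h
  push_cast at h2
  rwa [Real.one_rpow, Real.coe_toNNReal t ht] at h2

lemma lqB {p : ℝ} (hp1 : 1 ≤ p) (hp2 : p ≤ 2) {t : ℝ} (ht : 0 ≤ t) :
    (1 + t) ^ p ≤ 1 + p * t + t ^ p := by
  set f : ℝ → ℝ := fun s => 1 + p * s + s ^ p - (1 + s) ^ p with hf
  have hp0 : (0:ℝ) < p := by linarith
  have hder : ∀ x : ℝ, 0 < x →
      HasDerivAt f (p + p * x ^ (p-1) - p * (1+x) ^ (p-1)) x := by
    intro x hx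
    have h1 : HasDerivAt (fun s : ℝ => 1 + p * s) p x := by
      simpa using ((hasDerivAt_id x).const_mul p).const_add 1
    have h2 : HasDerivAt (fun s : ℝ => s ^ p) (p * x ^ (p-1)) x :=
      Real.hasDerivAt_rpow_const (Or.inl hx.ne')
    have h3 : HasDerivAt (fun s : ℝ => (1 + s) ^ p) (p * (1+x) ^ (p-1)) x := by
      have hinner : HasDerivAt (fun s : ℝ => 1 + s) 1 x := (hasDerivAt_id x).const_add 1
      have houter := Real.hasDerivAt_rpow_const (x := 1 + x) (p := p)
        (Or.inl (by positivity))
      exact (houter.comp x hinner).congr_deriv (mul_one _)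
    exact (h1.add h2).sub h3
  have hcont : ContinuousOn f (Set.Ici (0:ℝ)) := by
    apply ContinuousOn.sub
    · apply ContinuousOn.add
      · fun_prop
      · intro x hx
        exact (Real.continuousAt_rpow_const x p (Or.inr hp0.le)).continuousWithinAt
    · intro x hx
      exact ((Real.continuousAt_rpow_const (1+x) p (Or.inr hp0.le)).comp
        (by fun_prop : ContinuousAt (fun s : ℝ => 1 + s) x)).continuousWithinAt
  have hmono : MonotoneOn f (Set.Ici (0:ℝ)) := by
    apply monotoneOn_of_deriv_nonneg (convex_Ici 0) hcont
    · intro x hx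
      rw [interior_Ici] at hx
      exact ((hder x hx).differentiableAt).differentiableWithinAt
    · intro x hx
      rw [interior_Ici] at hx
      rw [(hder x hx).deriv]
      have := lqA (by linarith : (0:ℝ) ≤ p - 1) (by linarith) hx.le
      nlinarith
  have h0 : f 0 = 0 := by
    simp [hf, Real.zero_rpow hp0.ne']
  have := hmono (Set.self_mem_Ici) (Set.mem_Ici.2 ht) ht
  rw [h0] at this
  simp only [hf] at this
  linarith

lemma lqC {q : ℝ} (hq2 : 2 ≤ q) (hq3 : q ≤ 3) {t : ℝ} (ht1 : -1 ≤ t) (ht0 : t ≤ 0) :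
    (1 + t) ^ q ≤ 1 + q * t + q * (q-1) / 2 * t ^ 2 := by
  set g : ℝ → ℝ := fun s => 1 + q * s + q * (q-1) / 2 * s ^ 2 - (1 + s) ^ q with hg
  have hq0 : (0:ℝ) < q := by linarith
  have hder : ∀ x : ℝ, -1 < x →
      HasDerivAt g (q + q * (q-1) * x - q * (1+x) ^ (q-1)) x := by
    intro x hx
    have h1 : HasDerivAt (fun s : ℝ => 1 + q * s) q x := by
      simpa using ((hasDerivAt_id x).const_mul q).const_add 1
    have h2 : HasDerivAt (fun s : ℝ => q * (q-1) / 2 * s ^ 2) (q * (q-1) * x) x := by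
      have := (hasDerivAt_pow 2 x).const_mul (q * (q-1) / 2)
      exact this.congr_deriv (by norm_num; ring)
    have h3 : HasDerivAt (fun s : ℝ => (1 + s) ^ q) (q * (1+x) ^ (q-1)) x := by
      have hinner : HasDerivAt (fun s : ℝ => 1 + s) 1 x := (hasDerivAt_id x).const_add 1
      have houter := Real.hasDerivAt_rpow_const (x := 1 + x) (p := q)
        (Or.inl (ne_of_gt (by linarith : (0:ℝ) < 1 + x)))
      exact (houter.comp x hinner).congr_deriv (mul_one _)
    exact (h1.add h2).sub h3
  have hcont : ContinuousOn g (Set.Icc (-1:ℝ) 0) := by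
    apply ContinuousOn.sub
    · fun_prop
    · intro x hx
      exact ((Real.continuousAt_rpow_const (1+x) q (Or.inr hq0.le)).comp
        (by fun_prop : ContinuousAt (fun s : ℝ => 1 + s) x)).continuousWithinAt
  have hanti : AntitoneOn g (Set.Icc (-1:ℝ) 0) := by
    apply antitoneOn_of_deriv_nonpos (convex_Icc _ _) hcont
    · intro x hx
      rw [interior_Icc] at hx
      exact ((hder x hx.1).differentiableAt).differentiableWithinAt
    · intro x hx
      rw [interior_Icc] at hx
      rw [(hder x hx.1).deriv]
      have hbern := one_add_mul_self_le_rpow_one_add (le_of_lt hx.1)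
        (by linarith : (1:ℝ) ≤ q - 1)
      nlinarith
  have h0 : g 0 = 0 := by simp [hg]
  have := hanti (Set.mem_Icc.2 ⟨ht1, ht0⟩) (Set.mem_Icc.2 ⟨by norm_num, le_refl 0⟩) ht0
  rw [h0] at this
  simp only [hg] at this
  linarith

lemma lqB' {q : ℝ} (hq2 : 2 ≤ q) (hq3 : q ≤ 3) {t : ℝ} (ht : 0 ≤ t) :
    (1 + t) ^ q ≤ 1 + q * t + q * (q-1) / 2 * t ^ 2 + t ^ q := by
  set h : ℝ → ℝ := fun s => 1 + q * s + q * (q-1) / 2 * s ^ 2 + s ^ q - (1 + s) ^ q with hh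
  have hq0 : (0:ℝ) < q := by linarith
  have hder : ∀ x : ℝ, 0 < x →
      HasDerivAt h (q + q * (q-1) * x + q * x ^ (q-1) - q * (1+x) ^ (q-1)) x := by
    intro x hx
    have h1 : HasDerivAt (fun s : ℝ => 1 + q * s) q x := by
      simpa using ((hasDerivAt_id x).const_mul q).const_add 1
    have h2 : HasDerivAt (fun s : ℝ => q * (q-1) / 2 * s ^ 2) (q * (q-1) * x) x := by
      have := (hasDerivAt_pow 2 x).const_mul (q * (q-1) / 2)
      exact this.congr_deriv (by norm_num; ring)
    have h4 : HasDerivAt (fun s : ℝ => s ^ q) (q * x ^ (q-1)) x :=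
      Real.hasDerivAt_rpow_const (Or.inl hx.ne')
    have h3 : HasDerivAt (fun s : ℝ => (1 + s) ^ q) (q * (1+x) ^ (q-1)) x := by
      have hinner : HasDerivAt (fun s : ℝ => 1 + s) 1 x := (hasDerivAt_id x).const_add 1
      have houter := Real.hasDerivAt_rpow_const (x := 1 + x) (p := q)
        (Or.inl (by positivity))
      exact (houter.comp x hinner).congr_deriv (mul_one _)
    exact ((h1.add h2).add h4).sub h3
  have hcont : ContinuousOn h (Set.Ici (0:ℝ)) := by
    apply ContinuousOn.sub
    · apply ContinuousOn.add
      · fun_prop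
      · intro x hx
        exact (Real.continuousAt_rpow_const x q (Or.inr hq0.le)).continuousWithinAt
    · intro x hx
      exact ((Real.continuousAt_rpow_const (1+x) q (Or.inr hq0.le)).comp
        (by fun_prop : ContinuousAt (fun s : ℝ => 1 + s) x)).continuousWithinAt
  have hmono : MonotoneOn h (Set.Ici (0:ℝ)) := by
    apply monotoneOn_of_deriv_nonneg (convex_Ici 0) hcont
    · intro x hx
      rw [interior_Ici] at hx
      exact ((hder x hx).differentiableAt).differentiableWithinAt
    · intro x hx
      rw [interior_Ici] at hx
      rw [(hder x hx).deriv]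
      have := lqB (by linarith : (1:ℝ) ≤ q - 1) (by linarith) hx.le
      nlinarith
  have h0 : h 0 = 0 := by simp [hh, Real.zero_rpow hq0.ne']
  have := hmono (Set.self_mem_Ici) (Set.mem_Ici.2 ht) ht
  rw [h0] at this
  simp only [hh] at this
  linarith

lemma lqkey1 {q t : ℝ} (hq2 : 2 ≤ q) (hq3 : q ≤ 3) (ht : -1 ≤ t) :
    (1 + t) ^ q ≤ 1 + q * t + q * (q-1) / 2 * t ^ 2 + (max t 0) ^ q := by
  rcases le_or_gt 0 t with h | h
  · rw [max_eq_left h]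
    exact lqB' hq2 hq3 h
  · rw [max_eq_right h.le, Real.zero_rpow (by linarith : q ≠ 0), add_zero]
    exact lqC hq2 hq3 ht h.le

lemma lqptwise {q a b : ℝ} (hq2 : 2 ≤ q) (hq3 : q ≤ 3) (ha : 0 ≤ a) (hab : 0 ≤ a + b) :
    (a + b) ^ q ≤ a ^ q + q * (a ^ (q-1) * b) + q * (q-1) / 2 * (a ^ (q-2) * b ^ 2)
      + (max b 0) ^ q := by
  have hq0 : (0:ℝ) < q := by linarith
  rcases eq_or_lt_of_le ha with rfl | ha'
  · have hb : 0 ≤ b := by linarith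
    rw [max_eq_left hb, Real.zero_rpow hq0.ne', Real.zero_rpow (by linarith : q - 1 ≠ 0)]
    have h02 : 0 ≤ (0:ℝ) ^ (q-2) := Real.rpow_nonneg le_rfl _
    have : (0:ℝ) + b = b := by ring
    rw [this]
    have hterm : 0 ≤ q * (q-1) / 2 * ((0:ℝ) ^ (q-2) * b ^ 2) :=
      mul_nonneg (by nlinarith) (mul_nonneg h02 (sq_nonneg b))
    nlinarith
  · set t := b / a with htdef
    have ht : -1 ≤ t := by
      rw [htdef, le_div_iff₀ ha']
      linarith
    have hkey := lqkey1 hq2 hq3 ht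
    have haq : (0:ℝ) ≤ a ^ q := Real.rpow_nonneg ha q
    have hmul := mul_le_mul_of_nonneg_left hkey haq
    have e1 : a ^ q * (1 + t) ^ q = (a + b) ^ q := by
      rw [← Real.mul_rpow ha (by linarith : (0:ℝ) ≤ 1 + t)]
      congr 1
      rw [htdef, mul_add, mul_one, ← mul_div_assoc, mul_div_cancel_left₀ _ ha'.ne']
    have e2 : a ^ q * t = a ^ (q-1) * b := by
      have hsub : a ^ (q-1) = a ^ q / a := by rw [Real.rpow_sub ha', Real.rpow_one]
      rw [htdef, hsub]
      ring
    have e3 : a ^ q * t ^ 2 = a ^ (q-2) * b ^ 2 := by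
      have hsub : a ^ (q-2) = a ^ q / a ^ 2 := by
        rw [Real.rpow_sub ha', show (2:ℝ) = ((2:ℕ):ℝ) by norm_num, Real.rpow_natCast]
      rw [htdef, hsub]
      ring
    have e4 : a ^ q * (max t 0) ^ q = (max b 0) ^ q := by
      have : max t 0 = max b 0 / a := by
        rw [htdef, ← max_div_div_right ha'.le b 0, zero_div]
      rw [this, ← Real.mul_rpow ha (by positivity)]
      congr 1
      rw [← mul_div_assoc, mul_div_cancel_left₀ _ ha'.ne']
    have expand : a ^ q * (1 + q * t + q * (q-1) / 2 * t ^ 2 + (max t 0) ^ q)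
        = a ^ q + q * (a ^ q * t) + q * (q-1) / 2 * (a ^ q * t ^ 2)
          + a ^ q * (max t 0) ^ q := by ring
    rw [expand, e2, e3, e4, e1] at hmul
    exact hmul

theorem lq_norm_sq_expansion_q_two_three {X : Type*} [MeasurableSpace X]
    (μ : Measure X) (q : ℝ) (hq2 : 2 ≤ q) (hq3 : q ≤ 3)
    (u r : X → ℝ)
    (hu : MemLp u (ENNReal.ofReal q) μ) (hr : MemLp r (ENNReal.ofReal q) μ)
    (hu0 : ∀ x, 0 ≤ u x) (hur : ∀ x, 0 ≤ u x + r x)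
    (hune : ¬ u =ᵐ[μ] 0)
    (horth : ∫ x, (u x) ^ (q - 1) * r x ∂μ = 0) :
    (eLpNorm (u + r) (ENNReal.ofReal q) μ).toReal ^ 2
      ≤ (eLpNorm u (ENNReal.ofReal q) μ).toReal ^ 2
        + (eLpNorm u (ENNReal.ofReal q) μ).toReal ^ (2 - q)
          * ((q - 1) * ∫ x, (u x) ^ (q - 2) * (r x) ^ 2 ∂μ
             + (2 / q) * ∫ x, (max (r x) 0) ^ q ∂μ) := by
  have hq0 : (0:ℝ) < q := by linarith
  set p : ℝ≥0∞ := ENNReal.ofReal q with hp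
  have hp0 : p ≠ 0 := by
    rw [hp, Ne, ENNReal.ofReal_eq_zero]
    linarith
  have hpt : p ≠ ∞ := ENNReal.ofReal_ne_top
  have hptr : p.toReal = q := ENNReal.toReal_ofReal hq0.le
  set A := ∫ x, u x ^ (q - 2) * r x ^ 2 ∂μ with hA
  set B := ∫ x, (max (r x) 0) ^ q ∂μ with hB
  set Iu := ∫ x, u x ^ q ∂μ with hIudef
  set Iur := ∫ x, (u x + r x) ^ q ∂μ with hIurdef
  -- integrability facts
  have int_u : Integrable (fun x => u x ^ q) μ := by
    have h := memLp_one_iff_integrable.1 (hu.norm_rpow hp0 hpt)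
    exact h.congr (ae_of_all _ fun x => by
      simp [hptr, Real.norm_eq_abs, abs_of_nonneg (hu0 x)])
  have int_ur : Integrable (fun x => (u x + r x) ^ q) μ := by
    have h := memLp_one_iff_integrable.1 ((hu.add hr).norm_rpow hp0 hpt)
    exact h.congr (ae_of_all _ fun x => by
      simp [hptr, Real.norm_eq_abs, abs_of_nonneg (hur x)])
  have hmaxmem : MemLp (fun x => max (r x) 0) p μ := by
    refine hr.of_le ((hr.1.aemeasurable.max aemeasurable_const).aestronglyMeasurable)
      (ae_of_all _ fun x => ?_)
    rw [Real.norm_eq_abs, Real.norm_eq_abs, abs_of_nonneg (le_max_right _ _)]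
    exact max_le (le_abs_self _) (abs_nonneg _)
  have int_max : Integrable (fun x => (max (r x) 0) ^ q) μ := by
    have h := memLp_one_iff_integrable.1 (hmaxmem.norm_rpow hp0 hpt)
    exact h.congr (ae_of_all _ fun x => by
      simp [hptr, Real.norm_eq_abs, abs_of_nonneg (le_max_right (r x) 0)])
  -- Hölder exponent arithmetic
  have hconj : ∀ a b : ℝ, 0 ≤ a → 0 ≤ b → a + b = q →
      (1:ℝ≥0∞)/1 = 1/(p / ENNReal.ofReal a) + 1/(p / ENNReal.ofReal b) := by
    intro a b ha hb hab
    rw [one_div (p / ENNReal.ofReal a), one_div (p / ENNReal.ofReal b),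
      ENNReal.inv_div (Or.inl ENNReal.ofReal_ne_top) (Or.inr hp0),
      ENNReal.inv_div (Or.inl ENNReal.ofReal_ne_top) (Or.inr hp0),
      ENNReal.div_add_div_same, ← ENNReal.ofReal_add ha hb, hab, ← hp,
      ENNReal.div_self hp0 hpt]
    norm_num
  have int_m1 : Integrable (fun x => u x ^ (q - 1) * r x) μ := by
    have h1 : MemLp (fun x => u x ^ (q - 1)) (p / ENNReal.ofReal (q-1)) μ := by
      have h := hu.norm_rpow_div (ENNReal.ofReal (q-1))
      have heq : (fun x => ‖u x‖ ^ (ENNReal.ofReal (q-1)).toReal)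
          = fun x => u x ^ (q - 1) := by
        funext x
        rw [ENNReal.toReal_ofReal (by linarith : (0:ℝ) ≤ q - 1),
          Real.norm_eq_abs, abs_of_nonneg (hu0 x)]
      rwa [heq] at h
    have h2 : MemLp r (p / ENNReal.ofReal 1) μ := by
      simpa using hr
    have hsum := hconj (q-1) 1 (by linarith) (by norm_num) (by ring)
    have h := memLp_one_iff_integrable.1 (h2.smul h1 (hpqr := ⟨by simp only [one_div] at hsum; exact hsum.symm⟩))
    exact h.congr (ae_of_all _ fun x => by simp)
  have int_m2 : Integrable (fun x => u x ^ (q - 2) * r x ^ 2) μ := by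
    have h1 : MemLp (fun x => u x ^ (q - 2)) (p / ENNReal.ofReal (q-2)) μ := by
      have h := hu.norm_rpow_div (ENNReal.ofReal (q-2))
      have heq : (fun x => ‖u x‖ ^ (ENNReal.ofReal (q-2)).toReal)
          = fun x => u x ^ (q - 2) := by
        funext x
        rw [ENNReal.toReal_ofReal (by linarith : (0:ℝ) ≤ q - 2),
          Real.norm_eq_abs, abs_of_nonneg (hu0 x)]
      rwa [heq] at h
    have h2 : MemLp (fun x => r x ^ 2) (p / ENNReal.ofReal 2) μ := by
      have h := hr.norm_rpow_div (ENNReal.ofReal 2)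
      have heq : (fun x => ‖r x‖ ^ (ENNReal.ofReal 2).toReal)
          = fun x => r x ^ 2 := by
        funext x
        rw [ENNReal.toReal_ofReal (by norm_num : (0:ℝ) ≤ 2),
          Real.norm_eq_abs, show ((2:ℝ)) = ((2:ℕ):ℝ) by norm_num,
          Real.rpow_natCast, sq_abs]
      rwa [heq] at h
    have hsum := hconj (q-2) 2 (by linarith) (by norm_num) (by ring)
    have h := memLp_one_iff_integrable.1 (h2.smul h1 (hpqr := ⟨by simp only [one_div] at hsum; exact hsum.symm⟩))
    exact h.congr (ae_of_all _ fun x => by simp)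
  -- integrate the pointwise inequality
  have hptw : ∀ x, (u x + r x) ^ q
      ≤ u x ^ q + q * (u x ^ (q-1) * r x) + q * (q-1) / 2 * (u x ^ (q-2) * r x ^ 2)
        + (max (r x) 0) ^ q := fun x => lqptwise hq2 hq3 (hu0 x) (hur x)
  have hRHSint : Integrable (fun x => u x ^ q + q * (u x ^ (q-1) * r x)
      + q * (q-1) / 2 * (u x ^ (q-2) * r x ^ 2) + (max (r x) 0) ^ q) μ :=
    ((int_u.add (int_m1.const_mul q)).add (int_m2.const_mul _)).add int_max
  have i1 : Integrable (fun x => u x ^ q + q * (u x ^ (q-1) * r x)) μ :=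
    int_u.add (int_m1.const_mul q)
  have i3 : Integrable (fun x => q * (q-1) / 2 * (u x ^ (q-2) * r x ^ 2)) μ :=
    int_m2.const_mul _
  have i2 : Integrable (fun x => u x ^ q + q * (u x ^ (q-1) * r x)
      + q * (q-1) / 2 * (u x ^ (q-2) * r x ^ 2)) μ := i1.add i3
  have hIineq : Iur ≤ Iu + q * (q-1) / 2 * A + B := by
    have h := integral_mono int_ur hRHSint (fun x => hptw x)
    rw [integral_add i2 int_max, integral_add i1 i3,
      integral_add int_u (int_m1.const_mul q),
      integral_const_mul, integral_const_mul, horth] at h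
    simpa using h
  -- norms as integrals
  have hIu_nonneg : 0 ≤ Iu := integral_nonneg fun x => Real.rpow_nonneg (hu0 x) q
  have hIur_nonneg : 0 ≤ Iur := integral_nonneg fun x => Real.rpow_nonneg (hur x) q
  set N := (eLpNorm u p μ).toReal with hNdef
  set M := (eLpNorm (u + r) p μ).toReal with hMdef
  have hN : N = Iu ^ q⁻¹ := by
    rw [hNdef, hu.eLpNorm_eq_integral_rpow_norm hp0 hpt, hptr]
    rw [show (∫ a, ‖u a‖ ^ q ∂μ) = Iu from integral_congr_ae (ae_of_all _ fun x => by
      simp [Real.norm_eq_abs, abs_of_nonneg (hu0 x)])]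
    exact ENNReal.toReal_ofReal (Real.rpow_nonneg hIu_nonneg _)
  have hM : M = Iur ^ q⁻¹ := by
    rw [hMdef, (hu.add hr).eLpNorm_eq_integral_rpow_norm hp0 hpt, hptr]
    rw [show (∫ a, ‖(u + r) a‖ ^ q ∂μ) = Iur from integral_congr_ae (ae_of_all _ fun x => by
      simp [Real.norm_eq_abs, abs_of_nonneg (hur x)])]
    exact ENNReal.toReal_ofReal (Real.rpow_nonneg hIur_nonneg _)
  have hNq : N ^ q = Iu := by
    rw [hN, ← Real.rpow_mul hIu_nonneg, inv_mul_cancel₀ hq0.ne', Real.rpow_one]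
  have hMq : M ^ q = Iur := by
    rw [hM, ← Real.rpow_mul hIur_nonneg, inv_mul_cancel₀ hq0.ne', Real.rpow_one]
  have hNpos : 0 < N := by
    rw [hNdef]
    refine ENNReal.toReal_pos (fun h0 => hune ((eLpNorm_eq_zero_iff hu.1 hp0).1 h0)) hu.2.ne
  have hM_nonneg : 0 ≤ M := ENNReal.toReal_nonneg
  have hA_nonneg : 0 ≤ A := integral_nonneg fun x =>
    mul_nonneg (Real.rpow_nonneg (hu0 x) _) (sq_nonneg _)
  have hB_nonneg : 0 ≤ B := integral_nonneg fun x =>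
    Real.rpow_nonneg (le_max_right _ _) _
  set D := q * (q-1) / 2 * A + B with hD
  have hD_nonneg : 0 ≤ D := by
    have : (0:ℝ) ≤ q * (q-1) / 2 := by nlinarith
    have := mul_nonneg this hA_nonneg
    rw [hD]; linarith
  have hMq_le : M ^ q ≤ N ^ q + D := by
    rw [hNq, hMq, hD]; linarith
  have hNq_pos : 0 < N ^ q := Real.rpow_pos_of_pos hNpos q
  have step1 : M ^ (2:ℝ) ≤ (N ^ q + D) ^ (2/q) := by
    have he : M ^ (2:ℝ) = (M ^ q) ^ (2/q) := by
      rw [← Real.rpow_mul hM_nonneg]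
      congr 1
      field_simp
    rw [he]
    exact Real.rpow_le_rpow (Real.rpow_nonneg hM_nonneg q) hMq_le (by positivity)
  have step2 : (N ^ q + D) ^ (2/q) ≤ N ^ (2:ℝ) + 2/q * N ^ (2-q) * D := by
    have hsplit : N ^ q + D = N ^ q * (1 + D / N ^ q) := by field_simp
    rw [hsplit, Real.mul_rpow hNq_pos.le (by positivity), ← Real.rpow_mul hNpos.le]
    rw [show q * (2/q) = 2 by field_simp]
    have hfrac : (0:ℝ) ≤ D / N ^ q := div_nonneg hD_nonneg hNq_pos.le
    have hbern := rpow_one_add_le_one_add_mul_self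
      (by linarith : (-1:ℝ) ≤ D / N ^ q)
      (by positivity : (0:ℝ) ≤ 2/q)
      (by rw [div_le_one hq0]; linarith)
    calc N ^ (2:ℝ) * (1 + D / N ^ q) ^ (2/q)
        ≤ N ^ (2:ℝ) * (1 + 2/q * (D / N ^ q)) :=
          mul_le_mul_of_nonneg_left hbern (Real.rpow_nonneg hNpos.le _)
      _ = N ^ (2:ℝ) + 2/q * N ^ (2-q) * D := by
          have hsub : N ^ ((2:ℝ) - q) = N ^ (2:ℝ) / N ^ q := Real.rpow_sub hNpos 2 q
          rw [hsub]
          field_simp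
  have key : M ^ (2:ℝ) ≤ N ^ (2:ℝ) + 2/q * N ^ (2-q) * D := step1.trans step2
  have hDrw : N ^ (2-q) * ((q-1) * A + 2/q * B) = 2/q * N ^ (2-q) * D := by
    rw [hD]
    field_simp
  have hnat2 : ∀ y : ℝ, 0 ≤ y → y ^ (2:ℕ) = y ^ (2:ℝ) := fun y hy => by
    rw [show ((2:ℝ)) = ((2:ℕ):ℝ) by norm_num, Real.rpow_natCast]
  calc M ^ (2:ℕ) = M ^ (2:ℝ) := hnat2 M hM_nonneg
    _ ≤ N ^ (2:ℝ) + 2/q * N ^ (2-q) * D := key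
    _ = N ^ (2:ℕ) + N ^ (2-q) * ((q-1) * A + 2/q * B) := by
        rw [hDrw, hnat2 N hNpos.le]
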